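/- For n ≥ 4, every rainbow C_4-saturated graph on n vertices has at most one vertex of degree 1, and hence has at least (n−1)/2 + (n−1)/2 edges, giving sat*(n, C_4) ≥ n − 3/2. -/

import Mathlib

open SimpleGraph

/-- A proper edge coloring: edges sharing a vertex get distinct colors. -/
def IsProperEdgeColoring {V : Type*} {α : Type*} (G : SimpleGraph V) (c : Sym2 V → α) : Prop :=
  ∀ e ∈ G.edgeSet, ∀ f ∈ G.edgeSet, e ≠ f → (∃ x, x ∈ e ∧ x ∈ f) → c e ≠ c f

/-- A rainbow copy of `H` in `G` under the coloring `c`: an injective homomorphism whose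
edge images receive pairwise distinct colors. -/
def HasRainbowCopy {W V : Type*} {α : Type*} (H : SimpleGraph W) (G : SimpleGraph V)
    (c : Sym2 V → α) : Prop :=
  ∃ f : H →g G, Function.Injective f ∧
    ∀ e ∈ H.edgeSet, ∀ e' ∈ H.edgeSet, e ≠ e' → c (Sym2.map f e) ≠ c (Sym2.map f e')

/-- The graph `G` with the extra edge `xy`. -/
def addEdge {V : Type*} (G : SimpleGraph V) (x y : V) : SimpleGraph V :=
  G ⊔ SimpleGraph.fromEdgeSet {s(x, y)}

/-- `G` is rainbow `H`-saturated. -/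
def RainbowSaturated {V W : Type*} (G : SimpleGraph V) (H : SimpleGraph W) : Prop :=
  (∃ c : Sym2 V → ℕ, IsProperEdgeColoring G c ∧ ¬ HasRainbowCopy H G c) ∧
  ∀ x y : V, x ≠ y → ¬ G.Adj x y →
    ∀ c : Sym2 V → ℕ, IsProperEdgeColoring (addEdge G x y) c →
      HasRainbowCopy H (addEdge G x y) c

/-- The rainbow saturation number: the least number of edges of an `n`-vertex
rainbow `H`-saturated graph. -/
noncomputable def rainbowSatNum {W : Type*} (n : ℕ) (H : SimpleGraph W) : ℕ :=
  sInf {m | ∃ G : SimpleGraph (Fin n), RainbowSaturated G H ∧ G.edgeSet.ncard = m}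

lemma c4_struct : ∀ a b : Fin 4, (cycleGraph 4).Adj a b → ∃ a' b' : Fin 4,
    (cycleGraph 4).Adj a a' ∧ (cycleGraph 4).Adj b b' ∧ (cycleGraph 4).Adj a' b' ∧
    a' ≠ b ∧ a' ≠ b' ∧ b' ≠ a ∧ a' ≠ a ∧ b' ≠ b ∧ s(a', b') ≠ s(a, b) := by decide

lemma addEdge_adj {V : Type*} (G : SimpleGraph V) (x y a b : V) :
    (addEdge G x y).Adj a b ↔ G.Adj a b ∨ (s(a, b) = s(x, y) ∧ a ≠ b) := by
  simp [addEdge, fromEdgeSet_adj]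

lemma addEdge_edgeSet {V : Type*} (G : SimpleGraph V) (x y : V) (hxy : x ≠ y) :
    (addEdge G x y).edgeSet = insert s(x, y) G.edgeSet := by
  rw [addEdge, edgeSet_sup, edgeSet_fromEdgeSet]
  ext e
  simp only [Set.mem_union, Set.mem_diff, Set.mem_singleton_iff, Set.mem_insert_iff,
    Set.mem_setOf_eq]
  constructor
  · rintro (h | ⟨rfl, -⟩) <;> tauto
  · rintro (rfl | h)
    · exact Or.inr ⟨rfl, by simp [Sym2.isDiag_iff_proj_eq, hxy]⟩
    · exact Or.inl h

lemma struct_lemma {V : Type*} {G : SimpleGraph V} {x y : V} (hxy : x ≠ y)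
    (f : cycleGraph 4 →g addEdge G x y) (hinj : Function.Injective f) :
    ∀ e ∈ (cycleGraph 4).edgeSet, Sym2.map f e = s(x, y) →
    ∃ p q : V, p ≠ q ∧ p ≠ x ∧ p ≠ y ∧ q ≠ x ∧ q ≠ y ∧
      G.Adj x p ∧ G.Adj y q ∧ G.Adj p q ∧
      ∃ e' ∈ (cycleGraph 4).edgeSet, e' ≠ e ∧ Sym2.map f e' = s(p, q) := by
  have toG : ∀ u w : V, (addEdge G x y).Adj u w → w ≠ x → w ≠ y → G.Adj u w := by
    intro u w h hwx hwy
    rcases (addEdge_adj G x y u w).1 h with h | ⟨hs, -⟩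
    · exact h
    · rw [Sym2.eq_iff] at hs
      rcases hs with ⟨-, rfl⟩ | ⟨-, rfl⟩
      · exact absurd rfl hwy
      · exact absurd rfl hwx
  have key : ∀ u v : Fin 4, (cycleGraph 4).Adj u v → f u = x → f v = y →
      ∃ p q : V, p ≠ q ∧ p ≠ x ∧ p ≠ y ∧ q ≠ x ∧ q ≠ y ∧
        G.Adj x p ∧ G.Adj y q ∧ G.Adj p q ∧
        ∃ e' ∈ (cycleGraph 4).edgeSet, e' ≠ s(u, v) ∧ Sym2.map f e' = s(p, q) := by
    intro u v huv hu hv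
    obtain ⟨a', b', h1, h2, h3, h4, h5, h6, h7, h8, h9⟩ := c4_struct u v huv
    have hpx : f a' ≠ x := fun hh => h7 (hinj (hh.trans hu.symm))
    have hpy : f a' ≠ y := fun hh => h4 (hinj (hh.trans hv.symm))
    have hqx : f b' ≠ x := fun hh => h6 (hinj (hh.trans hu.symm))
    have hqy : f b' ≠ y := fun hh => h8 (hinj (hh.trans hv.symm))
    refine ⟨f a', f b', hinj.ne h5, hpx, hpy, hqx, hqy, ?_, ?_, ?_, s(a', b'),
      (cycleGraph 4).mem_edgeSet.2 h3, h9, Sym2.map_pair_eq f a' b'⟩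
    · have := f.map_adj h1
      rw [hu] at this
      exact toG _ _ this hpx hpy
    · have := f.map_adj h2
      rw [hv] at this
      exact toG _ _ this hqx hqy
    · exact toG _ _ (f.map_adj h3) hqx hqy
  intro e
  induction e using Sym2.ind with
  | _ a b =>
    intro he hmap
    rw [Sym2.map_pair_eq, Sym2.eq_iff] at hmap
    rw [SimpleGraph.mem_edgeSet] at he
    rcases hmap with ⟨ha, hb⟩ | ⟨ha, hb⟩
    · exact key a b he ha hb
    · have h := key b a he.symm hb ha
      rwa [show s(b, a) = s(a, b) from Sym2.eq_swap] at h

lemma proper_update {V : Type*} [DecidableEq V] (G : SimpleGraph V) (x y : V) (hxy : x ≠ y)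
    (hna : ¬ G.Adj x y) (c : Sym2 V → ℕ) (hp : IsProperEdgeColoring G c) (k : ℕ)
    (hk : ∀ e ∈ G.edgeSet, (x ∈ e ∨ y ∈ e) → c e ≠ k) :
    IsProperEdgeColoring (addEdge G x y) (Function.update c s(x, y) k) := by
  classical
  have hxyS : s(x, y) ∉ G.edgeSet := fun h => hna (G.mem_edgeSet.1 h)
  intro e he f hf hef hsh
  rw [addEdge_edgeSet G x y hxy, Set.mem_insert_iff] at he hf
  rcases he with rfl | he <;> rcases hf with rfl | hf
  · exact absurd rfl hef
  · rw [Function.update_self, Function.update_of_ne (show f ≠ s(x, y) from fun h => hxyS (h ▸ hf))]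
    obtain ⟨z, hz1, hz2⟩ := hsh
    rcases Sym2.mem_iff.1 hz1 with rfl | rfl
    · exact fun h => hk f hf (Or.inl hz2) h.symm
    · exact fun h => hk f hf (Or.inr hz2) h.symm
  · rw [Function.update_self, Function.update_of_ne (show e ≠ s(x, y) from fun h => hxyS (h ▸ he))]
    obtain ⟨z, hz1, hz2⟩ := hsh
    rcases Sym2.mem_iff.1 hz2 with rfl | rfl
    · exact hk e he (Or.inl hz1)
    · exact hk e he (Or.inr hz1)
  · rw [Function.update_of_ne (show e ≠ s(x, y) from fun h => hxyS (h ▸ he)),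
      Function.update_of_ne (show f ≠ s(x, y) from fun h => hxyS (h ▸ hf))]
    exact hp e he f hf hef hsh

lemma rainbow_cases {V : Type*} {G : SimpleGraph V} {x y : V} {c c' : Sym2 V → ℕ}
    (hagree : ∀ e, e ≠ s(x, y) → c' e = c e)
    (h : HasRainbowCopy (cycleGraph 4) (addEdge G x y) c') :
    HasRainbowCopy (cycleGraph 4) G c ∨
    ∃ f : cycleGraph 4 →g addEdge G x y, Function.Injective f ∧
      (∀ e ∈ (cycleGraph 4).edgeSet, ∀ e' ∈ (cycleGraph 4).edgeSet, e ≠ e' →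
        c' (Sym2.map f e) ≠ c' (Sym2.map f e')) ∧
      ∃ e ∈ (cycleGraph 4).edgeSet, Sym2.map f e = s(x, y) := by
  obtain ⟨f, hinj, hrb⟩ := h
  by_cases hx : ∃ e ∈ (cycleGraph 4).edgeSet, Sym2.map f e = s(x, y)
  · exact Or.inr ⟨f, hinj, hrb, hx⟩
  push_neg at hx
  left
  have hGadj : ∀ {a b : Fin 4}, (cycleGraph 4).Adj a b → G.Adj (f a) (f b) := by
    intro a b hab
    rcases (addEdge_adj G x y (f a) (f b)).1 (f.map_adj hab) with h | ⟨hs, -⟩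
    · exact h
    · exact absurd (by rw [Sym2.map_pair_eq]; exact hs)
        (hx s(a, b) ((cycleGraph 4).mem_edgeSet.2 hab))
  refine ⟨⟨⇑f, hGadj⟩, hinj, ?_⟩
  intro e he e' he' hne
  have h := hrb e he e' he' hne
  rwa [hagree _ (hx e he), hagree _ (hx e' he')] at h

lemma sat_fresh_struct {n : ℕ} {G : SimpleGraph (Fin n)}
    (hG : RainbowSaturated G (cycleGraph 4))
    {x y : Fin n} (hxy : x ≠ y) (hna : ¬ G.Adj x y) :
    ∃ p q : Fin n, p ≠ q ∧ p ≠ x ∧ p ≠ y ∧ q ≠ x ∧ q ≠ y ∧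
      G.Adj x p ∧ G.Adj y q ∧ G.Adj p q := by
  classical
  obtain ⟨c, hp, hr⟩ := hG.1
  set K := (Finset.univ.sup c) + 1 with hK
  have hfresh : ∀ e, c e ≠ K :=
    fun e => Nat.ne_of_lt (Nat.lt_succ_of_le (Finset.le_sup (Finset.mem_univ e)))
  have hp' := proper_update G x y hxy hna c hp K (fun e _ _ => hfresh e)
  have hrc := hG.2 x y hxy hna _ hp'
  rcases rainbow_cases (c := c) (fun e he => Function.update_of_ne he _ _) hrc with
    h | ⟨f, hinj, hrb, e, he, hmap⟩
  · exact absurd h hr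
  · obtain ⟨p, q, h1, h2, h3, h4, h5, h6, h7, h8, -⟩ := struct_lemma hxy f hinj e he hmap
    exact ⟨p, q, h1, h2, h3, h4, h5, h6, h7, h8⟩

lemma exists_third {n : ℕ} (hn : 3 ≤ n) (v w : Fin n) : ∃ u : Fin n, u ≠ v ∧ u ≠ w := by
  by_contra h
  push_neg at h
  have hsub : (Finset.univ : Finset (Fin n)) ⊆ {v, w} := by
    intro u _
    simp only [Finset.mem_insert, Finset.mem_singleton]
    rcases eq_or_ne u v with rfl | huv
    · exact Or.inl rfl
    · exact Or.inr (h u huv)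
  have h1 := Finset.card_le_card hsub
  have h2 : ({v, w} : Finset (Fin n)).card ≤ 2 :=
    (Finset.card_insert_le v {w}).trans (by simp)
  simp only [Finset.card_univ, Fintype.card_fin] at h1
  omega

lemma min_deg {n : ℕ} (hn : 2 ≤ n) (G : SimpleGraph (Fin n))
    (hG : RainbowSaturated G (cycleGraph 4)) (v : Fin n) :
    (G.neighborSet v).ncard ≠ 0 := by
  intro h0
  have hempty : G.neighborSet v = ∅ := by
    rwa [Set.ncard_eq_zero (Set.toFinite _)] at h0
  have hnt : Nontrivial (Fin n) := Fin.nontrivial_iff_two_le.mpr hn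
  obtain ⟨u, hu⟩ := exists_ne v
  have hnadj : ¬ G.Adj v u := fun h => by
    have hm : u ∈ G.neighborSet v := h
    rw [hempty] at hm; exact hm
  obtain ⟨p, q, -, -, -, -, -, hxp, -, -⟩ := sat_fresh_struct hG (Ne.symm hu) hnadj
  have hm : p ∈ G.neighborSet v := hxp
  rw [hempty] at hm; exact hm

lemma deg_one_unique {n : ℕ} (hn : 3 ≤ n) (G : SimpleGraph (Fin n))
    (hG : RainbowSaturated G (cycleGraph 4)) :
    ∀ v w : Fin n, (G.neighborSet v).ncard = 1 → (G.neighborSet w).ncard = 1 → v = w := by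
  classical
  intro v w hv hw
  by_contra hvw
  obtain ⟨v', hv'⟩ := Set.ncard_eq_one.1 hv
  obtain ⟨w', hw'⟩ := Set.ncard_eq_one.1 hw
  have hvv' : G.Adj v v' := by
    have h : v' ∈ G.neighborSet v := by rw [hv']; rfl
    exact h
  have hww' : G.Adj w w' := by
    have h : w' ∈ G.neighborSet w := by rw [hw']; rfl
    exact h
  have hnbrv : ∀ z, G.Adj v z → z = v' := by
    intro z hz
    have h : z ∈ G.neighborSet v := hz
    rwa [hv'] at h
  have hnbrw : ∀ z, G.Adj w z → z = w' := by
    intro z hz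
    have h : z ∈ G.neighborSet w := hz
    rwa [hw'] at h
  by_cases hadj : G.Adj v w
  · -- v, w adjacent: v' = w, w' = v
    have hv'w : v' = w := (hnbrv w hadj).symm
    have hw'v : w' = v := (hnbrw v hadj.symm).symm
    obtain ⟨u, huv, huw⟩ := exists_third hn v w
    have hnadj : ¬ G.Adj v u := fun h => huw ((hnbrv u h).trans hv'w)
    obtain ⟨p, q, -, -, -, hqx, -, hvp, -, hpq⟩ := sat_fresh_struct hG (Ne.symm huv) hnadj
    have hpw : p = w := (hnbrv p hvp).trans hv'w
    have hqv : q = v := (hnbrw q (hpw ▸ hpq)).trans hw'v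
    exact hqx hqv
  · -- v, w nonadjacent
    have hvne : v ≠ v' := G.ne_of_adj hvv'
    have hwne : w ≠ w' := G.ne_of_adj hww'
    have hvw' : v ≠ w' := fun h => hadj (h ▸ hww').symm
    have hwv' : w ≠ v' := fun h => hadj (h ▸ hvv')
    by_cases hcase : v' = w' ∨ ¬ G.Adj v' w'
    · obtain ⟨p, q, hpq, -, -, -, -, hvp, hwq, hpq'⟩ := sat_fresh_struct hG hvw hadj
      have hp : p = v' := hnbrv p hvp
      have hq : q = w' := hnbrw q hwq
      rcases hcase with h | h
      · exact hpq (by rw [hp, hq, h])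
      · exact h (by rw [← hp, ← hq]; exact hpq')
    · push_neg at hcase
      obtain ⟨hne', hadj'⟩ := hcase
      obtain ⟨c, hp, hr⟩ := hG.1
      have edge_at : ∀ (z z' : Fin n), (∀ t, G.Adj z t → t = z') →
          ∀ a b : Fin n, G.Adj a b → z ∈ s(a, b) → s(a, b) = s(z, z') := by
        intro z z' hz a b hab hm
        rcases Sym2.mem_iff.1 hm with rfl | rfl
        · rw [hz b hab]
        · rw [hz a hab.symm, Sym2.eq_swap]
      have hk : ∀ e ∈ G.edgeSet, (v ∈ e ∨ w ∈ e) → c e ≠ c s(v', w') := by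
        intro e
        induction e using Sym2.ind with
        | _ a b =>
          intro he hm
          have hab : G.Adj a b := G.mem_edgeSet.1 he
          have hor : s(a, b) = s(v, v') ∨ s(a, b) = s(w, w') := by
            rcases hm with hm | hm
            · exact Or.inl (edge_at v v' hnbrv a b hab hm)
            · exact Or.inr (edge_at w w' hnbrw a b hab hm)
          rcases hor with h | h <;> rw [h]
          · refine hp _ (G.mem_edgeSet.2 hvv') _ (G.mem_edgeSet.2 hadj') ?_ ⟨v', by simp⟩
            intro hh
            rcases Sym2.eq_iff.1 hh with ⟨h1, -⟩ | ⟨h1, -⟩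
            · exact hvne h1
            · exact hvw' h1
          · refine hp _ (G.mem_edgeSet.2 hww') _ (G.mem_edgeSet.2 hadj') ?_ ⟨w', by simp⟩
            intro hh
            rcases Sym2.eq_iff.1 hh with ⟨h1, -⟩ | ⟨h1, -⟩
            · exact hwv' h1
            · exact hwne h1
      have hp' := proper_update G v w hvw hadj c hp (c s(v', w')) hk
      have hrc := hG.2 v w hvw hadj _ hp'
      rcases rainbow_cases (c := c) (fun e he => Function.update_of_ne he _ _) hrc with
        h | ⟨f, hinj, hrb, e, he, hmap⟩
      · exact hr h
      · obtain ⟨p, q, -, -, -, -, -, hvp, hwq, -, e', he', hne, hmap'⟩ :=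
          struct_lemma hvw f hinj e he hmap
        have hpv' : p = v' := hnbrv p hvp
        have hqw' : q = w' := hnbrw q hwq
        have hsne : s(v', w') ≠ s(v, w) := by
          intro hh
          rcases Sym2.eq_iff.1 hh with ⟨h1, -⟩ | ⟨-, h2⟩
          · exact hvne h1.symm
          · exact hvw' h2.symm
        have := hrb e he e' he' (Ne.symm hne)
        rw [hmap, hmap', hpv', hqw', Function.update_self,
          Function.update_of_ne hsne] at this
        exact this rfl

lemma edge_bound {n : ℕ} (hn : 4 ≤ n) (G : SimpleGraph (Fin n))
    (hG : RainbowSaturated G (cycleGraph 4)) :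
    n - 1 ≤ G.edgeSet.ncard := by
  classical
  have hdeg : ∀ v, (G.neighborSet v).ncard = G.degree v := by
    intro v
    rw [Set.ncard_eq_toFinset_card', Set.toFinset_card, G.card_neighborSet_eq_degree]
  have hmin : ∀ v, 1 ≤ G.degree v := by
    intro v
    have h := min_deg (by omega) G hG v
    rw [hdeg] at h
    omega
  have hpt : ∀ v : Fin n, 2 ≤ G.degree v + (if G.degree v = 1 then 1 else 0) := by
    intro v
    have := hmin v
    by_cases h : G.degree v = 1 <;> simp [h] <;> omega
  have hsum : 2 * n ≤ ∑ v : Fin n, (G.degree v + if G.degree v = 1 then 1 else 0) := by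
    calc 2 * n = ∑ _v : Fin n, 2 := by simp [Finset.sum_const, Finset.card_univ, mul_comm]
    _ ≤ _ := Finset.sum_le_sum (fun v _ => hpt v)
  rw [Finset.sum_add_distrib, ← Finset.card_filter] at hsum
  have hcard : (Finset.univ.filter (fun v => G.degree v = 1)).card ≤ 1 := by
    rw [Finset.card_le_one]
    intro a ha b hb
    simp only [Finset.mem_filter] at ha hb
    exact deg_one_unique (by omega) G hG a b (by rw [hdeg]; exact ha.2)
      (by rw [hdeg]; exact hb.2)
  have hE : ∑ v : Fin n, G.degree v = 2 * G.edgeFinset.card :=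
    G.sum_degrees_eq_twice_card_edges
  have hES : G.edgeSet.ncard = G.edgeFinset.card := by
    rw [Set.ncard_eq_toFinset_card', Set.toFinset_card, ← Set.toFinset_card]
    congr 1
  omega

lemma exists_sat (n : ℕ) : ∃ G : SimpleGraph (Fin n), RainbowSaturated G (cycleGraph 4) := by
  classical
  set S : Set (SimpleGraph (Fin n)) :=
    {G | ∃ c : Sym2 (Fin n) → ℕ, IsProperEdgeColoring G c ∧
      ¬ HasRainbowCopy (cycleGraph 4) G c} with hS
  have hbot : (⊥ : SimpleGraph (Fin n)) ∈ S := by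
    refine ⟨fun _ => 0, ?_, ?_⟩
    · intro e he
      simp only [edgeSet_bot, Set.mem_empty_iff_false] at he
    · rintro ⟨f, -, -⟩
      exact f.map_adj (show (cycleGraph 4).Adj 0 1 by decide)
  have hfin : S.Finite := Set.toFinite S
  obtain ⟨G, hGS, hmax⟩ :=
    Set.Finite.exists_maximalFor (fun G => G.edgeSet.ncard) S hfin ⟨⊥, hbot⟩
  refine ⟨G, hGS, ?_⟩
  intro x y hxy hna c hc
  by_contra hrb
  have hmem : addEdge G x y ∈ S := ⟨c, hc, hrb⟩
  have hcard : (addEdge G x y).edgeSet.ncard = G.edgeSet.ncard + 1 := by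
    rw [addEdge_edgeSet G x y hxy,
      Set.ncard_insert_of_notMem (fun h => hna (G.mem_edgeSet.1 h)) (Set.toFinite _)]
  have h : (addEdge G x y).edgeSet.ncard ≤ G.edgeSet.ncard :=
    hmax hmem (show G.edgeSet.ncard ≤ (addEdge G x y).edgeSet.ncard by omega)
  omega

theorem stmt15 (n : ℕ) (hn : 4 ≤ n) :
    (∀ G : SimpleGraph (Fin n), RainbowSaturated G (cycleGraph 4) →
      {v : Fin n | (G.neighborSet v).ncard = 1}.ncard ≤ 1 ∧
      ((n : ℝ) - 1) / 2 + ((n : ℝ) - 1) / 2 ≤ (G.edgeSet.ncard : ℝ)) ∧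
    (n : ℝ) - 3 / 2 ≤ (rainbowSatNum n (cycleGraph 4) : ℝ) := by
  have main : ∀ G : SimpleGraph (Fin n), RainbowSaturated G (cycleGraph 4) →
      {v : Fin n | (G.neighborSet v).ncard = 1}.ncard ≤ 1 ∧
      ((n : ℝ) - 1) / 2 + ((n : ℝ) - 1) / 2 ≤ (G.edgeSet.ncard : ℝ) := by
    intro G hG
    constructor
    · rw [Set.ncard_le_one (Set.toFinite _)]
      intro a ha b hb
      exact deg_one_unique (by omega) G hG a b ha hb
    · have h := edge_bound hn G hG
      have h' : ((n - 1 : ℕ) : ℝ) ≤ (G.edgeSet.ncard : ℝ) := Nat.cast_le.mpr h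
      rw [Nat.cast_sub (by omega : 1 ≤ n)] at h'
      push_cast at h' ⊢
      linarith
  refine ⟨main, ?_⟩
  obtain ⟨G₀, hG₀⟩ := exists_sat n
  have hne : {m | ∃ G : SimpleGraph (Fin n),
      RainbowSaturated G (cycleGraph 4) ∧ G.edgeSet.ncard = m}.Nonempty :=
    ⟨G₀.edgeSet.ncard, G₀, hG₀, rfl⟩
  obtain ⟨G₁, hG₁, hcard⟩ := Nat.sInf_mem hne
  have hval : rainbowSatNum n (cycleGraph 4) = G₁.edgeSet.ncard := hcard.symm
  have h2 := (main G₁ hG₁).2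
  rw [hval]
  linarith
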